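/- A Fubini theorem for decaying continuous functions: if c > 0 and f : [0,∞)² → ℝ is continuous with |f(x,y)| ≤ c·max(x,y)^{−3} whenever max(x,y) ≥ 1, then both iterated Newton integrals ∫₀^∞(∫₀^∞ f(x,y) dy) dx and ∫₀^∞(∫₀^∞ f(x,y) dx) dy exist and are equal. -/

import Mathlib

open Filter Set Topology

open MeasureTheory

noncomputable section

/-- The open interval of reals with extended-real endpoints. -/
def eIoo (a b : EReal) : Set ℝ := {x : ℝ | a < (x : EReal) ∧ (x : EReal) < b}

/-- The filter of approach to the endpoint `c` from within the interval `(a,b)`. -/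
def endFilter (c a b : EReal) : Filter ℝ :=
  (nhds c).comap (fun x : ℝ => (x : EReal)) ⊓ Filter.principal (eIoo a b)

/-- `f` has Newton integral `v` over `(a,b)`: some primitive `F` of `f` on `(a,b)` has
finite one-sided limits `La` at `a⁺` and `Lb` at `b⁻`, and `v = Lb - La`. -/
def HasNewton (f : ℝ → ℝ) (a b : EReal) (v : ℝ) : Prop :=
  ∃ (F : ℝ → ℝ) (La Lb : ℝ),
    (∀ x ∈ eIoo a b, HasDerivAt F (f x) x) ∧
    Filter.Tendsto F (endFilter a a b) (nhds La) ∧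
    Filter.Tendsto F (endFilter b a b) (nhds Lb) ∧
    v = Lb - La

lemma eIoo_zero_top : eIoo ((0 : ℝ) : EReal) ⊤ = Ioi (0 : ℝ) := by
  ext x
  simp [eIoo, EReal.coe_lt_coe_iff, EReal.coe_lt_top x]

lemma endFilter_zero_le : endFilter ((0 : ℝ) : EReal) ((0 : ℝ) : EReal) ⊤ ≤ 𝓝[>] (0 : ℝ) := by
  rw [endFilter, eIoo_zero_top]
  refine inf_le_inf_right _ ?_
  rw [EReal.nhds_coe, Filter.comap_map EReal.coe_injective]

lemma endFilter_top_le : endFilter ⊤ ((0 : ℝ) : EReal) ⊤ ≤ atTop := by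
  refine le_trans inf_le_left ?_
  have : Tendsto (fun x : ℝ => x) ((nhds (⊤ : EReal)).comap (fun x : ℝ => (x : EReal))) atTop := by
    rw [tendsto_atTop]
    intro b
    have h1 : Ioi ((b : EReal)) ∈ 𝓝 (⊤ : EReal) := isOpen_Ioi.mem_nhds (EReal.coe_lt_top b)
    filter_upwards [preimage_mem_comap h1] with x hx
    exact le_of_lt (EReal.coe_lt_coe_iff.mp hx)
  exact this

lemma rpow_neg3 {y : ℝ} (hy : 0 < y) : y ^ (-3 : ℝ) = (y ^ 3)⁻¹ := by
  rw [show (-3 : ℝ) = -(3:ℕ) by norm_num, Real.rpow_neg hy.le, Real.rpow_natCast]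

lemma rpow_neg2 {y : ℝ} (hy : 0 < y) : y ^ (-2 : ℝ) = (y ^ 2)⁻¹ := by
  rw [show (-2 : ℝ) = -(2:ℕ) by norm_num, Real.rpow_neg hy.le, Real.rpow_natCast]

lemma aux_main (c C : ℝ) (hc : 0 < c) (f : ℝ × ℝ → ℝ)
    (hcont : ContinuousOn f (Set.Ici (0 : ℝ) ×ˢ Set.Ici (0 : ℝ)))
    (hdecay : ∀ x y : ℝ, 0 ≤ x → 0 ≤ y → 1 ≤ max x y →
      |f (x, y)| ≤ c / (max x y) ^ 3)
    (hC : ∀ p ∈ (Set.Icc (0:ℝ) 1) ×ˢ (Set.Icc (0:ℝ) 1), |f p| ≤ C) :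
    ∃ I : ℝ → ℝ,
      (∀ x : ℝ, 0 < x → HasNewton (fun y => f (x, y)) ((0 : ℝ) : EReal) ⊤ (I x)) ∧
      HasNewton I ((0 : ℝ) : EReal) ⊤
        (∫ z, f z ∂((volume.restrict (Set.Ioi 0)).prod (volume.restrict (Set.Ioi 0)))) := by
  set C' : ℝ := max C c with hC'def
  have hC'c : c ≤ C' := le_max_right _ _
  -- the uniform bound in the second variable
  set bnd : ℝ → ℝ := fun y => if y ≤ 1 then C' else c / y ^ 3 with hbnddef
  have hglob : ∀ x y : ℝ, 0 ≤ x → 0 ≤ y → |f (x, y)| ≤ bnd y := by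
    intro x y hx hy
    by_cases hy1 : y ≤ 1
    · simp only [hbnddef, if_pos hy1]
      by_cases hx1 : x ≤ 1
      · exact le_trans (hC (x, y) ⟨⟨hx, hx1⟩, ⟨hy, hy1⟩⟩) (le_max_left _ _)
      · have hx1' : (1:ℝ) ≤ x := le_of_lt (not_le.mp hx1)
        have hm : 1 ≤ max x y := le_trans hx1' (le_max_left _ _)
        refine le_trans (hdecay x y hx hy hm) (le_trans ?_ hC'c)
        have h1 : (1:ℝ) ≤ (max x y) ^ 3 := by nlinarith [hm, sq_nonneg (max x y)]
        calc c / (max x y) ^ 3 ≤ c / 1 := by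
              apply div_le_div_of_nonneg_left hc.le one_pos h1
          _ = c := div_one c
    · have hy1' : (1:ℝ) ≤ y := le_of_lt (not_le.mp hy1)
      have hm : 1 ≤ max x y := le_trans hy1' (le_max_right _ _)
      simp only [hbnddef, if_neg hy1]
      refine le_trans (hdecay x y hx hy hm) ?_
      apply div_le_div_of_nonneg_left hc.le (by positivity)
      exact pow_le_pow_left₀ (by linarith) (le_max_right _ _) 3
  have hC'0 : 0 ≤ C' := le_trans (abs_nonneg _)
    (le_trans (hglob 0 0 le_rfl le_rfl) (by simp [hbnddef]))
  -- integrability of the bound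
  have hbnd_meas : Measurable bnd := by
    apply Measurable.ite (measurableSet_le measurable_id measurable_const) measurable_const
    exact measurable_const.div ((measurable_id.pow_const 3))
  have hbnd_int : IntegrableOn bnd (Ioi (0:ℝ)) := by
    rw [show Ioi (0:ℝ) = Ioc 0 1 ∪ Ioi 1 from (Ioc_union_Ioi_eq_Ioi zero_le_one).symm]
    apply IntegrableOn.union
    · have base : IntegrableOn (fun _ : ℝ => C') (Ioc (0:ℝ) 1) :=
        integrableOn_const measure_Ioc_lt_top.ne
      refine base.congr_fun (fun y hy => ?_) measurableSet_Ioc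
      simp [hbnddef, if_pos hy.2]
    · have base : IntegrableOn (fun y : ℝ => c * y ^ (-3:ℝ)) (Ioi 1) :=
        (integrableOn_Ioi_rpow_of_lt (show (-3:ℝ) < -1 by norm_num) one_pos).const_mul c
      refine base.congr_fun (fun y hy => ?_) measurableSet_Ioi
      have hy0 : (0:ℝ) < y := lt_trans one_pos hy
      simp [hbnddef, if_neg (not_le.mpr (mem_Ioi.mp hy)), rpow_neg3 hy0, div_eq_mul_inv]
  -- slices
  have hslice_cont : ∀ x : ℝ, 0 ≤ x → ContinuousOn (fun y => f (x, y)) (Ici 0) := by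
    intro x hx
    apply hcont.comp (Continuous.continuousOn (continuous_const.prodMk continuous_id))
    intro y hy
    exact ⟨hx, hy⟩
  have hslice_meas : ∀ x : ℝ, 0 ≤ x →
      AEStronglyMeasurable (fun y => f (x, y)) (volume.restrict (Ioi 0)) := by
    intro x hx
    exact ((hslice_cont x hx).mono Ioi_subset_Ici_self).aestronglyMeasurable measurableSet_Ioi
  have hslice_int : ∀ x : ℝ, 0 ≤ x → IntegrableOn (fun y => f (x, y)) (Ioi 0) := by
    intro x hx
    apply Integrable.mono' hbnd_int (hslice_meas x hx)
    rw [ae_restrict_iff' measurableSet_Ioi]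
    exact Eventually.of_forall fun y hy => by
      simpa [Real.norm_eq_abs] using hglob x y hx hy.le
  set I : ℝ → ℝ := fun x => ∫ y in Ioi (0:ℝ), f (x, y) with hIdef
  -- Part 1 : Newton integral of slices
  have part1 : ∀ x : ℝ, 0 < x → HasNewton (fun y => f (x, y)) ((0 : ℝ) : EReal) ⊤ (I x) := by
    intro x hx
    refine ⟨fun t => ∫ s in (0:ℝ)..t, f (x, s), 0, I x, ?_, ?_, ?_, (sub_zero _).symm⟩
    · intro t ht
      rw [eIoo_zero_top] at ht
      have hsub : uIcc (0:ℝ) t ⊆ Ici 0 := by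
        rw [uIcc_of_le (le_of_lt ht)]
        exact Icc_subset_Ici_self
      exact intervalIntegral.integral_hasDerivAt_right
        (((hslice_cont x hx.le).mono hsub).intervalIntegrable)
        ⟨Ioi 0, Ioi_mem_nhds ht, hslice_meas x hx.le⟩
        (((hslice_cont x hx.le).continuousAt (Ici_mem_nhds ht)))
    · refine Tendsto.mono_left ?_ endFilter_zero_le
      apply squeeze_zero_norm' (a := fun t : ℝ => C' * |t|)
      · filter_upwards [Ioc_mem_nhdsGT_of_mem (Set.left_mem_Ico.mpr one_pos)] with t ht
        have hb := intervalIntegral.norm_integral_le_of_norm_le_const (C := C')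
          (f := fun s => f (x, s)) (a := 0) (b := t) ?_
        · simpa using hb
        · intro s hs
          rw [uIoc_of_le ht.1.le] at hs
          have h2 := hglob x s hx.le hs.1.le
          rw [hbnddef] at h2
          simp only [if_pos (hs.2.trans ht.2)] at h2
          simpa [Real.norm_eq_abs] using h2
      · have : Tendsto (fun t : ℝ => C' * |t|) (𝓝 0) (𝓝 (C' * |(0:ℝ)|)) := by
          exact (continuous_const.mul continuous_abs).tendsto 0
        simpa using this.mono_left nhdsWithin_le_nhds
    · exact (intervalIntegral_tendsto_integral_Ioi 0 (hslice_int x hx.le)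
        tendsto_id).mono_left endFilter_top_le
  -- the dominating bound for I
  set K0 : ℝ := ∫ y in Ioi (0:ℝ), bnd y with hK0def
  set Bd : ℝ → ℝ := fun x => if x ≤ 1 then K0 else (3 * c / 2) / x ^ 2 with hBddef
  have hψbd : ∀ x : ℝ, 0 < x → (∫ y in Ioi (0:ℝ), |f (x, y)|) ≤ Bd x := by
    intro x hx
    by_cases hx1 : x ≤ 1
    · rw [hBddef]
      simp only [if_pos hx1]
      rw [hK0def]
      apply setIntegral_mono_on (hslice_int x hx.le).abs hbnd_int measurableSet_Ioi
      intro y hy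
      exact hglob x y hx.le hy.le
    · have hx1' : (1:ℝ) < x := not_le.mp hx1
      rw [hBddef]
      simp only [if_neg hx1]
      have hsplit : Ioi (0:ℝ) = Ioc 0 x ∪ Ioi x := (Ioc_union_Ioi_eq_Ioi hx.le).symm
      have habs : IntegrableOn (fun y => |f (x, y)|) (Ioi 0) := (hslice_int x hx.le).abs
      have hint1 : IntegrableOn (fun y => |f (x, y)|) (Ioc 0 x) :=
        habs.mono_set Ioc_subset_Ioi_self
      have hint2 : IntegrableOn (fun y => |f (x, y)|) (Ioi x) :=
        habs.mono_set (Ioi_subset_Ioi hx.le)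
      rw [hsplit, setIntegral_union (Ioc_disjoint_Ioi le_rfl) measurableSet_Ioi hint1 hint2]
      have hb1 : (∫ y in Ioc (0:ℝ) x, |f (x, y)|) ≤ (c / x ^ 3) * x := by
        have : (∫ y in Ioc (0:ℝ) x, |f (x, y)|) ≤ ∫ _ in Ioc (0:ℝ) x, c / x ^ 3 := by
          apply setIntegral_mono_on hint1 (integrableOn_const measure_Ioc_lt_top.ne)
            measurableSet_Ioc
          intro y hy
          have := hdecay x y hx.le hy.1.le (le_trans hx1'.le (le_max_left _ _))
          rwa [max_eq_left hy.2] at this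
        refine le_trans this ?_
        rw [setIntegral_const]
        simp [Real.volume_Ioc, ENNReal.toReal_ofReal hx.le, max_eq_left hx.le, mul_comm]
      have hb2 : (∫ y in Ioi x, |f (x, y)|) ≤ c * (x ^ (-2:ℝ) / 2) := by
        have step : (∫ y in Ioi x, |f (x, y)|) ≤ ∫ y in Ioi x, c * y ^ (-3:ℝ) := by
          apply setIntegral_mono_on hint2
            ((integrableOn_Ioi_rpow_of_lt (show (-3:ℝ) < -1 by norm_num)
              (lt_trans one_pos hx1')).const_mul c) measurableSet_Ioi
          intro y hy
          have hy0 : (0:ℝ) < y := lt_trans (lt_trans one_pos hx1') hy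
          have := hdecay x y hx.le hy0.le
            (le_trans hx1'.le (le_max_left _ _))
          rw [max_eq_right hy.le] at this
          rw [rpow_neg3 hy0]
          rw [div_eq_mul_inv] at this
          exact this
        refine le_trans step ?_
        rw [integral_const_mul]
        have hval := integral_Ioi_rpow_of_lt (show (-3:ℝ) < -1 by norm_num)
          (lt_trans one_pos hx1')
        rw [hval]
        have heq : -x ^ ((-3:ℝ) + 1) / (-3 + 1) = x ^ (-2:ℝ) / 2 := by norm_num
        rw [heq]
      have hx0 : x ≠ 0 := ne_of_gt hx
      refine le_trans (add_le_add hb1 hb2) ?_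
      rw [rpow_neg2 hx]
      field_simp
      norm_num
  have hBd_int : IntegrableOn Bd (Ioi (0:ℝ)) := by
    rw [show Ioi (0:ℝ) = Ioc 0 1 ∪ Ioi 1 from (Ioc_union_Ioi_eq_Ioi zero_le_one).symm]
    apply IntegrableOn.union
    · have base : IntegrableOn (fun _ : ℝ => K0) (Ioc (0:ℝ) 1) :=
        integrableOn_const measure_Ioc_lt_top.ne
      refine base.congr_fun (fun y hy => ?_) measurableSet_Ioc
      simp [hBddef, if_pos hy.2]
    · have base : IntegrableOn (fun y : ℝ => (3 * c / 2) * y ^ (-2:ℝ)) (Ioi 1) :=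
        (integrableOn_Ioi_rpow_of_lt (show (-2:ℝ) < -1 by norm_num) one_pos).const_mul (3 * c / 2)
      refine base.congr_fun (fun y hy => ?_) measurableSet_Ioi
      have hy0 : (0:ℝ) < y := lt_trans one_pos hy
      simp [hBddef, if_neg (not_le.mpr (mem_Ioi.mp hy)), rpow_neg2 hy0, div_eq_mul_inv]
  -- continuity of I on (0,∞)
  have hIcont : ContinuousOn I (Ioi (0:ℝ)) := by
    apply continuousOn_of_dominated (bound := bnd)
    · intro x hx
      exact hslice_meas x hx.le
    · intro x hx
      rw [ae_restrict_iff' measurableSet_Ioi]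
      exact Eventually.of_forall fun y hy => by
        simpa [Real.norm_eq_abs] using hglob x y hx.le hy.le
    · exact hbnd_int
    · rw [ae_restrict_iff' measurableSet_Ioi]
      refine Eventually.of_forall fun y hy => ?_
      have hc1 : ContinuousOn (fun x : ℝ => f (x, y)) (Ici 0) := by
        apply hcont.comp (Continuous.continuousOn (continuous_id.prodMk continuous_const))
        intro x hx
        exact ⟨hx, (show (0:ℝ) < y from hy).le⟩
      exact hc1.mono Ioi_subset_Ici_self
  have hI_meas : AEStronglyMeasurable I (volume.restrict (Ioi 0)) :=
    hIcont.aestronglyMeasurable measurableSet_Ioi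
  have hIbd : ∀ x : ℝ, 0 < x → ‖I x‖ ≤ Bd x := by
    intro x hx
    refine le_trans ?_ (hψbd x hx)
    have h := norm_integral_le_integral_norm (μ := volume.restrict (Ioi 0)) (fun y => f (x, y))
    simpa [Real.norm_eq_abs, hIdef] using h
  have hI_int : IntegrableOn I (Ioi (0:ℝ)) := by
    apply Integrable.mono' hBd_int hI_meas
    rw [ae_restrict_iff' measurableSet_Ioi]
    exact Eventually.of_forall fun x hx => hIbd x hx
  have hK0nn : 0 ≤ K0 := by
    rw [hK0def]
    apply setIntegral_nonneg measurableSet_Ioi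
    intro y hy
    exact le_trans (abs_nonneg _) (hglob 0 y le_rfl hy.le)
  have hBdK0 : ∀ s : ℝ, 0 < s → s ≤ 1 → Bd s = K0 := by
    intro s hs hs1
    rw [hBddef]
    simp [if_pos hs1]
  -- product integrability and Fubini
  have hprod_meas : AEStronglyMeasurable f
      ((volume.restrict (Set.Ioi (0:ℝ))).prod (volume.restrict (Set.Ioi (0:ℝ)))) := by
    rw [Measure.prod_restrict]
    exact (hcont.mono (prod_mono Ioi_subset_Ici_self Ioi_subset_Ici_self)).aestronglyMeasurable
      (measurableSet_Ioi.prod measurableSet_Ioi)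
  have hprod_int : Integrable f
      ((volume.restrict (Set.Ioi (0:ℝ))).prod (volume.restrict (Set.Ioi (0:ℝ)))) := by
    rw [integrable_prod_iff hprod_meas]
    constructor
    · rw [ae_restrict_iff' measurableSet_Ioi]
      exact Eventually.of_forall fun x hx => hslice_int x hx.le
    · apply Integrable.mono' hBd_int (hprod_meas.norm.integral_prod_right')
      rw [ae_restrict_iff' measurableSet_Ioi]
      refine Eventually.of_forall fun x hx => ?_
      have h1 : (0:ℝ) ≤ ∫ y in Ioi (0:ℝ), ‖f (x, y)‖ :=
        setIntegral_nonneg measurableSet_Ioi fun y _ => norm_nonneg _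
      rw [Real.norm_eq_abs, abs_of_nonneg h1]
      simpa [Real.norm_eq_abs] using hψbd x hx
  have hfubini : (∫ x in Ioi (0:ℝ), I x) =
      ∫ z, f z ∂((volume.restrict (Set.Ioi (0:ℝ))).prod (volume.restrict (Set.Ioi (0:ℝ)))) :=
    (integral_prod f hprod_int).symm
  -- Part 2 : Newton integral of I
  refine ⟨I, part1, ?_⟩
  rw [← hfubini]
  refine ⟨fun t => ∫ s in (0:ℝ)..t, I s, 0, ∫ x in Ioi (0:ℝ), I x, ?_, ?_, ?_,
    (sub_zero _).symm⟩
  · intro t ht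
    rw [eIoo_zero_top] at ht
    have hii : IntervalIntegrable I volume 0 t := by
      rw [intervalIntegrable_iff_integrableOn_Ioc_of_le ht.le]
      exact hI_int.mono_set Ioc_subset_Ioi_self
    exact intervalIntegral.integral_hasDerivAt_right hii
      ⟨Ioi 0, Ioi_mem_nhds ht, hI_meas⟩ (hIcont.continuousAt (Ioi_mem_nhds ht))
  · refine Tendsto.mono_left ?_ endFilter_zero_le
    apply squeeze_zero_norm' (a := fun t : ℝ => K0 * |t|)
    · filter_upwards [Ioc_mem_nhdsGT_of_mem (Set.left_mem_Ico.mpr one_pos)] with t ht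
      have hb := intervalIntegral.norm_integral_le_of_norm_le_const (C := K0)
        (f := I) (a := 0) (b := t) ?_
      · simpa using hb
      · intro s hs
        rw [uIoc_of_le ht.1.le] at hs
        rw [← hBdK0 s hs.1 (hs.2.trans ht.2)]
        exact hIbd s hs.1
    · have : Tendsto (fun t : ℝ => K0 * |t|) (𝓝 0) (𝓝 (K0 * |(0:ℝ)|)) :=
        (continuous_const.mul continuous_abs).tendsto 0
      simpa using this.mono_left nhdsWithin_le_nhds
  · exact (intervalIntegral_tendsto_integral_Ioi 0 hI_int tendsto_id).mono_left endFilter_top_le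

/-- A Fubini theorem for iterated Newton integrals of continuous functions on the closed
positive quadrant decaying like `max(x,y)^(-3)`. -/
theorem stmt_10 (c : ℝ) (hc : 0 < c) (f : ℝ × ℝ → ℝ)
    (hcont : ContinuousOn f (Set.Ici (0 : ℝ) ×ˢ Set.Ici (0 : ℝ)))
    (hdecay : ∀ x y : ℝ, 0 ≤ x → 0 ≤ y → 1 ≤ max x y →
      |f (x, y)| ≤ c / (max x y) ^ 3) :
    ∃ (I J : ℝ → ℝ) (v : ℝ),
      (∀ x : ℝ, 0 < x → HasNewton (fun y => f (x, y)) ((0 : ℝ) : EReal) ⊤ (I x)) ∧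
      HasNewton I ((0 : ℝ) : EReal) ⊤ v ∧
      (∀ y : ℝ, 0 < y → HasNewton (fun x => f (x, y)) ((0 : ℝ) : EReal) ⊤ (J y)) ∧
      HasNewton J ((0 : ℝ) : EReal) ⊤ v := by
  obtain ⟨C, hC⟩ := (isCompact_Icc.prod isCompact_Icc).exists_bound_of_continuousOn
    (hcont.mono (prod_mono Icc_subset_Ici_self Icc_subset_Ici_self))
  have hC' : ∀ p ∈ (Icc (0:ℝ) 1) ×ˢ (Icc (0:ℝ) 1), |f p| ≤ C := fun p hp => by
    simpa [Real.norm_eq_abs] using hC p hp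
  obtain ⟨I, hI1, hI2⟩ := aux_main c C hc f hcont hdecay hC'
  set g : ℝ × ℝ → ℝ := fun p => f (p.2, p.1) with hgdef
  have hgcont : ContinuousOn g (Set.Ici (0:ℝ) ×ˢ Set.Ici (0:ℝ)) := by
    apply hcont.comp continuous_swap.continuousOn
    intro p hp
    exact ⟨hp.2, hp.1⟩
  have hgdecay : ∀ x y : ℝ, 0 ≤ x → 0 ≤ y → 1 ≤ max x y →
      |g (x, y)| ≤ c / (max x y) ^ 3 := by
    intro x y hx hy hm
    have h := hdecay y x hy hx (by rwa [max_comm])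
    rw [max_comm y x] at h
    exact h
  have hgC : ∀ p ∈ (Icc (0:ℝ) 1) ×ˢ (Icc (0:ℝ) 1), |g p| ≤ C := fun p hp =>
    hC' (p.2, p.1) ⟨hp.2, hp.1⟩
  obtain ⟨J, hJ1, hJ2⟩ := aux_main c C hc g hgcont hgdecay hgC
  have hswap : (∫ z, g z ∂((volume.restrict (Set.Ioi (0:ℝ))).prod (volume.restrict (Set.Ioi 0))))
      = ∫ z, f z ∂((volume.restrict (Set.Ioi (0:ℝ))).prod (volume.restrict (Set.Ioi 0))) :=
    integral_prod_swap f
  rw [hswap] at hJ2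
  exact ⟨I, J, _, hI1, hI2, fun y hy => hJ1 y hy, hJ2⟩
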